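/- Two almost abelian Lie algebras g_A and g_{A'} (with A, A' nilpotent, nonzero) are isomorphic if and only if A' is conjugate to a nonzero scalar multiple of A. -/

import Mathlib

/-- The almost abelian Lie algebra `g_A = ℝ e₀ ⋉_A ℝ^m`: underlying vector space
`ℝ × (Fin m → ℝ)`, with bracket `⁅(s,v), (t,w)⁆ = (0, s • A w - t • A v)`, i.e.
`⁅e₀, w⁆ = A w` on the abelian ideal `ℝ^m`. -/
def gA (m : ℕ) (_A : Matrix (Fin m) (Fin m) ℝ) : Type := ℝ × (Fin m → ℝ)

namespace gA

variable {m : ℕ} {A : Matrix (Fin m) (Fin m) ℝ}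

instance : AddCommGroup (gA m A) := inferInstanceAs (AddCommGroup (ℝ × (Fin m → ℝ)))
noncomputable instance : Module ℝ (gA m A) := inferInstanceAs (Module ℝ (ℝ × (Fin m → ℝ)))

instance : LieRing (gA m A) where
  bracket x y := ((0 : ℝ), x.1 • A.mulVec y.2 - y.1 • A.mulVec x.2)
  add_lie x y z := by
    show ((0 : ℝ), (x.1 + y.1) • A.mulVec z.2 - z.1 • A.mulVec (x.2 + y.2))
      = ((0 : ℝ) + 0, (x.1 • A.mulVec z.2 - z.1 • A.mulVec x.2)
          + (y.1 • A.mulVec z.2 - z.1 • A.mulVec y.2))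
    rw [Prod.mk.injEq]
    constructor
    · ring
    · rw [Matrix.mulVec_add]
      module
  lie_add x y z := by
    show ((0 : ℝ), x.1 • A.mulVec (y.2 + z.2) - (y.1 + z.1) • A.mulVec x.2)
      = ((0 : ℝ) + 0, (x.1 • A.mulVec y.2 - y.1 • A.mulVec x.2)
          + (x.1 • A.mulVec z.2 - z.1 • A.mulVec x.2))
    rw [Prod.mk.injEq]
    constructor
    · ring
    · rw [Matrix.mulVec_add]
      module
  lie_self x := by
    show ((0 : ℝ), x.1 • A.mulVec x.2 - x.1 • A.mulVec x.2) = (0, 0)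
    rw [Prod.mk.injEq]
    exact ⟨rfl, sub_self _⟩
  leibniz_lie x y z := by
    show ((0 : ℝ), x.1 • A.mulVec (y.1 • A.mulVec z.2 - z.1 • A.mulVec y.2)
            - (0 : ℝ) • A.mulVec x.2)
      = ((0 : ℝ), (0 : ℝ) • A.mulVec z.2 - z.1 • A.mulVec (x.1 • A.mulVec y.2 - y.1 • A.mulVec x.2))
        + ((0 : ℝ), y.1 • A.mulVec (x.1 • A.mulVec z.2 - z.1 • A.mulVec x.2)
            - (0 : ℝ) • A.mulVec y.2)
    rw [Prod.mk.injEq]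
    constructor
    · show (0 : ℝ) = 0 + 0; ring
    · show _ = (_ : Fin m → ℝ) + _
      rw [Matrix.mulVec_sub, Matrix.mulVec_sub, Matrix.mulVec_sub,
        Matrix.mulVec_smul, Matrix.mulVec_smul, Matrix.mulVec_smul,
        Matrix.mulVec_smul, Matrix.mulVec_smul, Matrix.mulVec_smul]
      module

noncomputable instance : LieAlgebra ℝ (gA m A) where
  lie_smul t x y := by
    show ((0 : ℝ), x.1 • A.mulVec (t • y.2) - (t * y.1) • A.mulVec x.2)
      = t • (((0 : ℝ), x.1 • A.mulVec y.2 - y.1 • A.mulVec x.2) : ℝ × (Fin m → ℝ))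
    rw [Prod.smul_mk, Prod.mk.injEq]
    constructor
    · simp
    · rw [Matrix.mulVec_smul]
      module

end gA

section Aux

variable {m : ℕ} {A A' : Matrix (Fin m) (Fin m) ℝ}

lemma gA.bracket_def (x y : gA m A) :
    ⁅x, y⁆ = ((0 : ℝ), x.1 • A.mulVec y.2 - y.1 • A.mulVec x.2) := rfl

/-- The backward direction: conjugation gives an isomorphism. -/
noncomputable def gA.equivOfConj (c : ℝ) (hc : c ≠ 0) (P : (Matrix (Fin m) (Fin m) ℝ)ˣ)
    (h : A' = c • ((P : Matrix (Fin m) (Fin m) ℝ) * A * (↑P⁻¹ : Matrix (Fin m) (Fin m) ℝ))) :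
    gA m A ≃ₗ⁅ℝ⁆ gA m A' where
  toFun x := ((c⁻¹ * x.1, (P : Matrix (Fin m) (Fin m) ℝ).mulVec x.2) : ℝ × (Fin m → ℝ))
  invFun x := ((c * x.1, (↑P⁻¹ : Matrix (Fin m) (Fin m) ℝ).mulVec x.2) : ℝ × (Fin m → ℝ))
  map_add' x y := by
    show (_, _) = ((_, _) + (_, _) : ℝ × (Fin m → ℝ))
    erw [Prod.mk_add_mk, Prod.mk.injEq]
    constructor
    · show c⁻¹ * (x.1 + y.1) = _; ring
    · show (P : Matrix (Fin m) (Fin m) ℝ).mulVec (x.2 + y.2) = _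
      rw [Matrix.mulVec_add]
  map_smul' r x := by
    show (_, _) = r • ((_, _) : ℝ × (Fin m → ℝ))
    rw [Prod.smul_mk, Prod.mk.injEq]
    constructor
    · show c⁻¹ * (r * x.1) = r • (c⁻¹ * x.1); rw [smul_eq_mul]; ring
    · show (P : Matrix (Fin m) (Fin m) ℝ).mulVec (r • x.2) = _
      rw [Matrix.mulVec_smul]
  map_lie' {x y} := by
    have key : ∀ w : Fin m → ℝ,
        A'.mulVec ((P : Matrix (Fin m) (Fin m) ℝ).mulVec w)
          = c • (P : Matrix (Fin m) (Fin m) ℝ).mulVec (A.mulVec w) := by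
      intro w
      rw [h, Matrix.mulVec_mulVec, Matrix.mulVec_mulVec, Matrix.smul_mul,
        Matrix.smul_mulVec, mul_assoc, mul_assoc, Units.inv_mul, mul_one]
    show ((c⁻¹ * (0 : ℝ), (P : Matrix (Fin m) (Fin m) ℝ).mulVec (x.1 • A.mulVec y.2 - y.1 • A.mulVec x.2)) : ℝ × (Fin m → ℝ))
      = ((0 : ℝ), (c⁻¹ * x.1) • A'.mulVec ((P : Matrix (Fin m) (Fin m) ℝ).mulVec y.2)
          - (c⁻¹ * y.1) • A'.mulVec ((P : Matrix (Fin m) (Fin m) ℝ).mulVec x.2))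
    rw [Prod.mk.injEq]
    refine ⟨mul_zero _, ?_⟩
    rw [key, key, Matrix.mulVec_sub, Matrix.mulVec_smul, Matrix.mulVec_smul]
    match_scalars <;> field_simp
  left_inv x := by
    show ((c * (c⁻¹ * x.1), (↑P⁻¹ : Matrix (Fin m) (Fin m) ℝ).mulVec
      ((P : Matrix (Fin m) (Fin m) ℝ).mulVec x.2)) : ℝ × (Fin m → ℝ)) = x
    rw [Matrix.mulVec_mulVec, Units.inv_mul, Matrix.one_mulVec, ← mul_assoc,
      mul_inv_cancel₀ hc, one_mul]
    rfl
  right_inv x := by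
    show ((c⁻¹ * (c * x.1), (P : Matrix (Fin m) (Fin m) ℝ).mulVec
      ((↑P⁻¹ : Matrix (Fin m) (Fin m) ℝ).mulVec x.2)) : ℝ × (Fin m → ℝ)) = x
    rw [Matrix.mulVec_mulVec, Units.mul_inv, Matrix.one_mulVec, ← mul_assoc,
      inv_mul_cancel₀ hc, one_mul]
    rfl

end Aux

section Forward

variable {m : ℕ} {A A' : Matrix (Fin m) (Fin m) ℝ}

lemma gA.conj_of_equiv (f : gA m A ≃ₗ⁅ℝ⁆ gA m A') :
    ∃ (c : ℝ) (P : (Matrix (Fin m) (Fin m) ℝ)ˣ),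
      c ≠ 0 ∧ A' = c • ((P : Matrix (Fin m) (Fin m) ℝ) * A
        * (↑P⁻¹ : Matrix (Fin m) (Fin m) ℝ)) := by
  have fadd : ∀ p q : gA m A, f (p + q) = f p + f q := fun p q =>
    f.toLinearEquiv.map_add p q
  have fsm : ∀ (r : ℝ) (p : gA m A), f (r • p) = r • f p := fun r p =>
    f.toLinearEquiv.map_smul r p
  -- Step 1: find x with x.1 ≠ 0 and (f x).1 ≠ 0
  obtain ⟨x, hs, ha⟩ : ∃ x : gA m A, x.1 ≠ 0 ∧ (f x).1 ≠ 0 := by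
    by_cases h1 : (f ((1, 0) : gA m A)).1 = 0
    · have hfy : (f (f.symm ((1, 0) : gA m A'))).1 = 1 :=
        congrArg Prod.fst (f.apply_symm_apply ((1, 0) : gA m A'))
      by_cases h2 : (f.symm ((1, 0) : gA m A')).1 = 0
      · refine ⟨@HAdd.hAdd (gA m A) (gA m A) (gA m A) _ ((1, 0) : gA m A)
          (f.symm ((1, 0) : gA m A')), ?_, ?_⟩
        · show (1 : ℝ) + (f.symm ((1, 0) : gA m A')).1 ≠ 0
          rw [h2]; norm_num
        · erw [fadd]
          show (f ((1, 0) : gA m A)).1 + (f (f.symm ((1, 0) : gA m A'))).1 ≠ 0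
          rw [h1, hfy]; norm_num
      · exact ⟨f.symm ((1, 0) : gA m A'), h2, by rw [hfy]; norm_num⟩
    · exact ⟨(1, 0), one_ne_zero, h1⟩
  set s : ℝ := x.1 with hs_def
  set a : ℝ := (f x).1 with ha_def
  set u : Fin m → ℝ := (f x).2 with hu_def
  -- smul/add compatibility for the inclusion of the abelian part
  have hsm : ∀ (r : ℝ) (w : Fin m → ℝ),
      f ((0, r • w) : gA m A) = r • f ((0, w) : gA m A) := by
    intro r w
    erw [← fsm]
    congr 1
    show ((0 : ℝ), r • w) = ((r • (0 : ℝ), r • w) : ℝ × (Fin m → ℝ))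
    rw [smul_zero]
  have hadd : ∀ w w' : Fin m → ℝ,
      f ((0, w + w') : gA m A) = f ((0, w) : gA m A) + f ((0, w') : gA m A) := by
    intro w w'
    erw [← fadd]
    congr 1
    show ((0 : ℝ), w + w') = (((0 : ℝ) + 0, w + w') : ℝ × (Fin m → ℝ))
    rw [add_zero]
  -- the bracket relation
  have hbr : ∀ w : Fin m → ℝ, f ((0, s • A.mulVec w) : gA m A)
      = (((0 : ℝ), a • A'.mulVec ((f ((0, w) : gA m A)).2)
          - (f ((0, w) : gA m A)).1 • A'.mulVec u) : gA m A') := by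
    intro w
    have h2 := f.map_lie x ((0, w) : gA m A)
    have e : (⁅x, ((0, w) : gA m A)⁆ : gA m A) = ((0 : ℝ), s • A.mulVec w) := by
      show ((0 : ℝ), x.1 • A.mulVec w - (0 : ℝ) • A.mulVec x.2) = _
      rw [zero_smul, sub_zero]
    exact (congrArg f e).symm.trans h2
  -- the intertwiner Q
  set Q : (Fin m → ℝ) →ₗ[ℝ] (Fin m → ℝ) :=
    { toFun := fun w => (f ((0, w) : gA m A)).2 - (a⁻¹ * (f ((0, w) : gA m A)).1) • u
      map_add' := by
        intro w w'
        show (f ((0, w + w') : gA m A)).2 - (a⁻¹ * (f ((0, w + w') : gA m A)).1) • u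
          = ((f ((0, w) : gA m A)).2 - (a⁻¹ * (f ((0, w) : gA m A)).1) • u)
            + ((f ((0, w') : gA m A)).2 - (a⁻¹ * (f ((0, w') : gA m A)).1) • u)
        rw [hadd]
        show ((f ((0, w) : gA m A)).2 + (f ((0, w') : gA m A)).2)
            - (a⁻¹ * ((f ((0, w) : gA m A)).1 + (f ((0, w') : gA m A)).1)) • u = _
        match_scalars <;> ring
      map_smul' := by
        intro r w
        show (f ((0, r • w) : gA m A)).2 - (a⁻¹ * (f ((0, r • w) : gA m A)).1) • u
          = r • ((f ((0, w) : gA m A)).2 - (a⁻¹ * (f ((0, w) : gA m A)).1) • u)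
        rw [hsm]
        show (r • (f ((0, w) : gA m A)).2) - (a⁻¹ * (r * (f ((0, w) : gA m A)).1)) • u = _
        match_scalars <;> ring } with hQ_def
  have hQapp : ∀ w : Fin m → ℝ,
      Q w = (f ((0, w) : gA m A)).2 - (a⁻¹ * (f ((0, w) : gA m A)).1) • u := fun _ => rfl
  -- key relation : s • Q (A w) = a • A' (Q w)
  have hQrel : ∀ w : Fin m → ℝ,
      s • Q (A.mulVec w) = a • A'.mulVec (Q w) := by
    intro w
    have hb := hbr w
    rw [hsm s (A.mulVec w)] at hb
    have hlam : s * (f ((0, A.mulVec w) : gA m A)).1 = 0 := congrArg Prod.fst hb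
    have hmu : s • (f ((0, A.mulVec w) : gA m A)).2
        = a • A'.mulVec ((f ((0, w) : gA m A)).2)
          - (f ((0, w) : gA m A)).1 • A'.mulVec u := congrArg Prod.snd hb
    rw [hQapp, hQapp, smul_sub, hmu, Matrix.mulVec_sub, Matrix.mulVec_smul, smul_sub,
      smul_smul, smul_smul]
    rw [show s * (a⁻¹ * (f ((0, A.mulVec w) : gA m A)).1)
        = a⁻¹ * (s * (f ((0, A.mulVec w) : gA m A)).1) from by ring, hlam, mul_zero, zero_smul,
      sub_zero]
    rw [show a * (a⁻¹ * (f ((0, w) : gA m A)).1) = (f ((0, w) : gA m A)).1 from by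
      rw [← mul_assoc, mul_inv_cancel₀ ha, one_mul]]
  -- injectivity of Q
  have hQinj : Function.Injective Q := by
    rw [injective_iff_map_eq_zero]
    intro w hw
    have hmu : (f ((0, w) : gA m A)).2 = (a⁻¹ * (f ((0, w) : gA m A)).1) • u := by
      have := sub_eq_zero.mp (hw : Q w = 0)
      rw [hQapp] at hw
      exact sub_eq_zero.mp hw
    have hfw : f ((0, w) : gA m A) = (a⁻¹ * (f ((0, w) : gA m A)).1) • f x := by
      show f ((0, w) : gA m A) = (((a⁻¹ * (f ((0, w) : gA m A)).1) * a,
        (a⁻¹ * (f ((0, w) : gA m A)).1) • u) : ℝ × (Fin m → ℝ))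
      refine Prod.ext ?_ hmu
      show (f ((0, w) : gA m A)).1 = (a⁻¹ * (f ((0, w) : gA m A)).1) * a
      field_simp
    have h5 : f ((0, w) : gA m A) = f ((a⁻¹ * (f ((0, w) : gA m A)).1) • x) := by
      rw [fsm]
      exact hfw
    have hw2 : ((0, w) : gA m A) = (a⁻¹ * (f ((0, w) : gA m A)).1) • x := f.injective h5
    have h0 : (0 : ℝ) = (a⁻¹ * (f ((0, w) : gA m A)).1) * s := congrArg Prod.fst hw2
    have hc0 : a⁻¹ * (f ((0, w) : gA m A)).1 = 0 := by
      rcases mul_eq_zero.mp h0.symm with h | h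
      · exact h
      · exact absurd h hs
    have h2 : w = (a⁻¹ * (f ((0, w) : gA m A)).1) • x.2 := congrArg Prod.snd hw2
    rw [hc0, zero_smul] at h2
    exact h2
  have hQbij : Function.Bijective Q :=
    ⟨hQinj, (LinearMap.injective_iff_surjective).mp hQinj⟩
  have hQunit : IsUnit (LinearMap.toMatrixAlgEquiv' Q) :=
    ((Module.End.isUnit_iff Q).mpr hQbij).map LinearMap.toMatrixAlgEquiv'
  obtain ⟨P, hP⟩ := hQunit
  have hQmv : ∀ w : Fin m → ℝ, (P : Matrix (Fin m) (Fin m) ℝ).mulVec w = Q w := by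
    intro w
    rw [hP, ← Matrix.toLinAlgEquiv'_apply, Matrix.toLinAlgEquiv'_toMatrixAlgEquiv']
  -- matrix identity
  have hM : s • ((P : Matrix (Fin m) (Fin m) ℝ) * A)
      = a • (A' * (P : Matrix (Fin m) (Fin m) ℝ)) := by
    apply Matrix.toLin'.injective
    refine LinearMap.ext fun w => ?_
    rw [Matrix.toLin'_apply, Matrix.toLin'_apply, Matrix.smul_mulVec,
      Matrix.smul_mulVec, ← Matrix.mulVec_mulVec, ← Matrix.mulVec_mulVec,
      hQmv, hQmv, hQrel]
  refine ⟨s * a⁻¹, P, mul_ne_zero hs (inv_ne_zero ha), ?_⟩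
  have hM2 : s • ((P : Matrix (Fin m) (Fin m) ℝ) * A * (↑P⁻¹ : Matrix (Fin m) (Fin m) ℝ))
      = a • A' := by
    rw [← Matrix.smul_mul, hM, Matrix.smul_mul, mul_assoc, Units.mul_inv, mul_one]
  rw [mul_comm, mul_smul, hM2, smul_smul, inv_mul_cancel₀ ha, one_smul]

end Forward

/-- Two almost abelian Lie algebras `g_A` and `g_{A'}` (with `A, A'`
nilpotent, nonzero) are isomorphic if and only if `A'` is conjugate to a nonzero scalar
multiple of `A`. -/
theorem stmt2 (m : ℕ) (A A' : Matrix (Fin m) (Fin m) ℝ)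
    (hA : IsNilpotent A) (hA' : IsNilpotent A') (hA0 : A ≠ 0) (hA'0 : A' ≠ 0) :
    Nonempty (gA m A ≃ₗ⁅ℝ⁆ gA m A') ↔
      ∃ (c : ℝ) (P : (Matrix (Fin m) (Fin m) ℝ)ˣ),
        c ≠ 0 ∧ A' = c • ((P : Matrix (Fin m) (Fin m) ℝ) * A * (↑P⁻¹ : Matrix (Fin m) (Fin m) ℝ)) := by
  constructor
  · rintro ⟨f⟩
    exact gA.conj_of_equiv f
  · rintro ⟨c, P, hc, h⟩
    exact ⟨gA.equivOfConj c hc P h⟩
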